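/- If R is a von Neumann regular ring, then the identity map R → R is the maximal flat epimorphic extension in the following sense: any injective ring epimorphism f : R → S making S flat as a left R-module and such that S is generated by f(R) as a ring of quotients with f(J)S = S for J ranging over a filter of dense right ideals, satisfies: every finitely generated right ideal J of R with f(J)S = S must equal R. Concretely: in a von Neumann regular ring R, if J is a finitely generated right ideal of R and the inclusion R → S is a flat ring epimorphism with f(J)S = S, then J = R. -/

import Mathlib

open TensorProduct

universe v

lemma fg_ideal_span_idem {R : Type*} [CommRing R]
    (hvn : ∀ a : R, ∃ x : R, a * x * a = a) (J : Ideal R) (hfg : J.FG) :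
    ∃ e : R, e * e = e ∧ J = Ideal.span {e} := by
  refine Submodule.fg_induction (motive := fun J _ => ∃ e : R, e * e = e ∧ J = Ideal.span {e}) ?_ ?_ J hfg
  · intro a
    obtain ⟨x, hx⟩ := hvn a
    refine ⟨a * x, by linear_combination x * hx, ?_⟩
    apply le_antisymm
    · rw [Submodule.span_le, Set.singleton_subset_iff]
      exact Ideal.mem_span_singleton.2 ⟨a, by linear_combination -hx⟩
    · rw [Ideal.span_le, Set.singleton_subset_iff]
      exact Ideal.mem_span_singleton.2 ⟨x, rfl⟩
  · rintro I₁ I₂ _ _ ⟨e, he, rfl⟩ ⟨f, hf, rfl⟩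
    refine ⟨e + f - e * f, by linear_combination ((1 - f) * (1 - f)) * he + (1 - e) * hf, ?_⟩
    set g := e + f - e * f with hg
    apply le_antisymm
    · apply sup_le <;> rw [Ideal.span_le, Set.singleton_subset_iff]
      · exact Ideal.mem_span_singleton.2 ⟨e, by linear_combination (f - 1) * he⟩
      · exact Ideal.mem_span_singleton.2 ⟨f, by linear_combination (e - 1) * hf⟩
    · rw [Ideal.span_le, Set.singleton_subset_iff]
      have h1 : e ∈ Ideal.span {e} ⊔ Ideal.span {f} :=
        Submodule.mem_sup_left (Ideal.mem_span_singleton_self e)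
      have h2 : f ∈ Ideal.span {e} ⊔ Ideal.span {f} :=
        Submodule.mem_sup_right (Ideal.mem_span_singleton_self f)
      have h3 : e * f ∈ Ideal.span {e} ⊔ Ideal.span {f} := Ideal.mul_mem_right f _ h1
      exact Submodule.sub_mem _ (Submodule.add_mem _ h1 h2) h3

theorem stmt_15 {R S : Type*} [CommRing R] [CommRing S] [Algebra R S]
    [Module.Flat R S]
    (hvn : ∀ a : R, ∃ x : R, a * x * a = a)
    (hinj : Function.Injective (algebraMap R S))
    (hepi : ∀ (T : Type v) [Ring T] (g h : S →+* T),
      g.comp (algebraMap R S) = h.comp (algebraMap R S) → g = h)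
    (J : Ideal R) (hfg : J.FG) (hJ : Ideal.map (algebraMap R S) J = ⊤) :
    J = ⊤ := by
  obtain ⟨e, he, rfl⟩ := fg_ideal_span_idem hvn J hfg
  rw [Ideal.map_span, Set.image_singleton, Ideal.span_singleton_eq_top] at hJ
  obtain ⟨s, hs⟩ := hJ.exists_right_inv
  have h1 : algebraMap R S e = 1 := by
    calc algebraMap R S e = algebraMap R S e * (algebraMap R S e * s) := by rw [hs, mul_one]
      _ = algebraMap R S (e * e) * s := by rw [map_mul]; ring
      _ = algebraMap R S e * s := by rw [he]
      _ = 1 := hs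
  have : e = 1 := hinj (by rw [h1, map_one])
  rw [this, Ideal.span_singleton_one]
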